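/- Let p be a prime, let k be an algebraically closed field of characteristic p, and let G be a finite group whose Sylow p-subgroups have order exactly p. Let V be a finite-dimensional irreducible (simple) kG-module with dim_k V = p. Then every element g ∈ G of order p acts on V with a single Jordan block of size p; that is, (ρ(g) − 1)^(p−1) ≠ 0, where ρ : G → GL(V) is the action map. -/

import Mathlib

/-- If `G` is a finite group with Sylow `p`-subgroups of order exactly `p`,
`k` is algebraically closed of characteristic `p`, and `V` is a simple
`kG`-module of `k`-dimension `p`, then any element `g ∈ G` of order `p` acts
on `V` with a single Jordan block of size `p`: `(ρ(g) - 1)^(p-1) ≠ 0`. -/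
theorem stmt_4 (p : ℕ) [Fact p.Prime]
    (k : Type*) [Field k] [IsAlgClosed k] [CharP k p]
    (G : Type*) [Group G] [Finite G]
    (hSyl : ∀ P : Sylow p G, Nat.card P = p)
    (V : Type*) [AddCommGroup V] [Module k V]
    [Module (MonoidAlgebra k G) V] [IsScalarTower k (MonoidAlgebra k G) V]
    [IsSimpleModule (MonoidAlgebra k G) V]
    [FiniteDimensional k V] (hdim : Module.finrank k V = p)
    (g : G) (hg : orderOf g = p) :
    ∃ v : V, (((MonoidAlgebra.of k G g : MonoidAlgebra k G) - 1) ^ (p - 1)) • v ≠ 0 := by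
  classical
  by_contra hcon
  push_neg at hcon
  have hp : p.Prime := Fact.out
  haveI : Nontrivial V := IsSimpleModule.nontrivial (MonoidAlgebra k G) V
  obtain ⟨v₀, hv₀⟩ := exists_ne (0 : V)
  -- the action as an algebra homomorphism
  let ρ : MonoidAlgebra k G →ₐ[k] Module.End k V := Algebra.lsmul k k V
  have hρ : ∀ (a : MonoidAlgebra k G) (z : V), ρ a z = a • z := fun _ _ => rfl
  let Rg : G → Module.End k V := fun x => ρ (MonoidAlgebra.of k G x)
  have hRmul : ∀ x y : G, Rg x * Rg y = Rg (x * y) := by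
    intro x y
    show ρ (MonoidAlgebra.of k G x) * ρ (MonoidAlgebra.of k G y) = _
    rw [← map_mul, ← map_mul]
  have hRone : Rg 1 = 1 := by
    show ρ (MonoidAlgebra.of k G 1) = 1
    rw [map_one, map_one]
  have hRinv : ∀ x : G, Rg x * Rg x⁻¹ = 1 := fun x => by
    rw [hRmul, mul_inv_cancel, hRone]
  have hRinv' : ∀ x : G, Rg x⁻¹ * Rg x = 1 := fun x => by
    rw [hRmul, inv_mul_cancel, hRone]
  let σ : Module.End k V := Rg g
  let u : Module.End k V := σ - 1
  haveI : Nontrivial (Module.End k V) :=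
    ⟨1, 0, fun h => hv₀ (by simpa using LinearMap.congr_fun h v₀)⟩
  haveI : CharP (Module.End k V) p := charP_of_injective_algebraMap' (A := Module.End k V) k p
  have hgp : g ^ p = 1 := by rw [← hg]; exact pow_orderOf_eq_one g
  have hσp : σ ^ p = 1 := by
    have h1 : (MonoidAlgebra.of k G g : MonoidAlgebra k G) ^ p = 1 := by
      rw [← map_pow, hgp, map_one]
    show ρ (MonoidAlgebra.of k G g) ^ p = 1
    rw [← map_pow, h1, map_one]
  have hupow : u ^ p = 0 := by
    have h2 := sub_pow_char_of_commute p (Commute.one_right σ)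
    rw [hσp, one_pow, sub_self] at h2
    exact h2
  have hρu : ρ ((MonoidAlgebra.of k G g : MonoidAlgebra k G) - 1) = u := by
    rw [map_sub, map_one]
  have hup1 : u ^ (p - 1) = 0 := by
    apply LinearMap.ext; intro z
    rw [← hρu, ← map_pow]
    show (((MonoidAlgebra.of k G g : MonoidAlgebra k G) - 1) ^ (p - 1)) • z
      = (0 : Module.End k V) z
    rw [hcon z, LinearMap.zero_apply]
  -- the nilpotency index r of u
  have hex : ∃ n, u ^ n = 0 := ⟨p - 1, hup1⟩
  set r := Nat.find hex with hrdef
  have hur : u ^ r = 0 := Nat.find_spec hex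
  have hrle : r ≤ p - 1 := Nat.find_le hup1
  have hr1 : 1 ≤ r := by
    rcases Nat.eq_zero_or_pos r with h0 | h; swap
    · exact h
    exfalso
    rw [h0, pow_zero] at hur
    exact one_ne_zero hur
  have hrp : r < p := lt_of_le_of_lt hrle (Nat.sub_lt hp.pos one_pos)
  have hur1 : u ^ (r - 1) ≠ 0 := Nat.find_min hex (by omega)
  obtain ⟨v, hv⟩ : ∃ z : V, (u ^ (r - 1)) z ≠ 0 := by
    by_contra h
    push_neg at h
    exact hur1 (LinearMap.ext fun z => by rw [h z, LinearMap.zero_apply])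
  -- a linear functional with l (u^(r-1) v) = 1
  obtain ⟨l, hl⟩ :=
    LinearMap.exists_extend (LinearEquiv.coord k V ((u ^ (r - 1)) v) hv).toLinearMap
  have hlw : l ((u ^ (r - 1)) v) = 1 := by
    have h1 := LinearMap.congr_fun hl
      ⟨(u ^ (r - 1)) v, Submodule.mem_span_singleton_self _⟩
    simpa [LinearEquiv.coord_self] using h1
  -- the endomorphism β commuting with u, of trace r
  let Q : ℕ → ℕ → Module.End k V := fun i j =>
    (LinearMap.toSpanSingleton k V ((u ^ i) v)) ∘ₗ (l ∘ₗ (u ^ j : V →ₗ[k] V))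
  have hQapp : ∀ i j z, Q i j z = l ((u ^ j) z) • ((u ^ i) v) := fun _ _ _ => rfl
  have hQl : ∀ i j, u * Q i j = Q (i + 1) j := by
    intro i j
    apply LinearMap.ext; intro z
    show u (Q i j z) = Q (i + 1) j z
    have e : u ((u ^ i) v) = (u ^ (i + 1)) v := by
      rw [pow_succ', Module.End.mul_apply]
    rw [hQapp, hQapp, map_smul, e]
  have hQr : ∀ i j, Q i j * u = Q i (j + 1) := by
    intro i j
    apply LinearMap.ext; intro z
    show Q i j (u z) = Q i (j + 1) z
    have e : (u ^ j) (u z) = (u ^ (j + 1)) z := by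
      rw [pow_succ, Module.End.mul_apply]
    rw [hQapp, hQapp, e]
  have hQlz : ∀ j, Q r j = 0 := by
    intro j
    apply LinearMap.ext; intro z
    rw [hQapp, hur, LinearMap.zero_apply, smul_zero, LinearMap.zero_apply]
  have hQrz : ∀ i, Q i r = 0 := by
    intro i
    apply LinearMap.ext; intro z
    rw [hQapp, hur, LinearMap.zero_apply, map_zero, zero_smul]
  let β : Module.End k V := ∑ i ∈ Finset.range r, Q i (r - 1 - i)
  have hcommuβ : u * β = β * u := by
    show u * ∑ i ∈ Finset.range r, Q i (r - 1 - i)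
      = (∑ i ∈ Finset.range r, Q i (r - 1 - i)) * u
    rw [Finset.mul_sum, Finset.sum_mul]
    have hle : ∀ i ∈ Finset.range r, u * Q i (r - 1 - i) = Q (i + 1) (r - (i + 1)) := by
      intro i _
      rw [hQl]
      congr 1
      omega
    have hre : ∀ i ∈ Finset.range r, Q i (r - 1 - i) * u = Q i (r - i) := by
      intro i hi
      have hi' : i < r := Finset.mem_range.mp hi
      rw [hQr]
      congr 1
      omega
    rw [Finset.sum_congr rfl hle, Finset.sum_congr rfl hre]
    have e1 : ∑ i ∈ Finset.range (r + 1), Q i (r - i)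
        = (∑ i ∈ Finset.range r, Q (i + 1) (r - (i + 1))) + Q 0 (r - 0) :=
      Finset.sum_range_succ' _ r
    have e2 : ∑ i ∈ Finset.range (r + 1), Q i (r - i)
        = (∑ i ∈ Finset.range r, Q i (r - i)) + Q r (r - r) :=
      Finset.sum_range_succ _ r
    have hz0 : Q 0 (r - 0) = 0 := by
      have : r - 0 = r := by omega
      rw [this]
      exact hQrz 0
    have hzr : Q r (r - r) = 0 := hQlz _
    rw [hz0, add_zero] at e1
    rw [hzr, add_zero] at e2
    rw [← e1, e2]
  have hcommσβ : Commute σ β := by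
    have h1 : Commute u β := hcommuβ
    have h2 := h1.add_left (Commute.one_left β)
    have h3 : u + 1 = σ := sub_add_cancel σ 1
    rwa [h3] at h2
  -- the subgroup H generated by g
  let H : Subgroup G := Subgroup.zpowers g
  have hRg_pow : ∀ n : ℕ, Rg (g ^ n) = σ ^ n := by
    intro n
    show ρ (MonoidAlgebra.of k G (g ^ n)) = (ρ (MonoidAlgebra.of k G g)) ^ n
    rw [map_pow, map_pow]
  have hcommH : ∀ h ∈ H, Commute (Rg h) β := by
    intro h hh
    obtain ⟨z, hz⟩ := Subgroup.mem_zpowers_iff.mp hh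
    have hpz : (0 : ℤ) ≤ z % (p : ℤ) := Int.emod_nonneg z (by exact_mod_cast hp.ne_zero)
    have key : g ^ (z % (p : ℤ)) = g ^ z := by
      rw [← hg]
      exact zpow_mod_orderOf g z
    have hzn : g ^ ((z % (p : ℤ)).toNat) = h := by
      rw [← hz, ← key, ← zpow_natCast, Int.toNat_of_nonneg hpz]
    rw [← hzn, hRg_pow]
    exact hcommσβ.pow_left _
  letI : Fintype (G ⧸ H) := Fintype.ofFinite _
  let F : G ⧸ H → Module.End k V := fun c => Rg c.out * β * Rg c.out⁻¹
  let T : Module.End k V := ∑ c : G ⧸ H, F c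
  -- conjugation invariance of T
  have hF : ∀ (y : G) (c : G ⧸ H), (QuotientGroup.mk y : G ⧸ H) = c →
      Rg y * β * Rg y⁻¹ = F c := by
    intro y c hc
    have hmem : y⁻¹ * c.out ∈ H :=
      QuotientGroup.eq.mp (by rw [hc, QuotientGroup.out_eq'])
    have hββ : Rg (y⁻¹ * c.out) * β * Rg (y⁻¹ * c.out)⁻¹ = β := by
      rw [(hcommH _ hmem).eq, mul_assoc, hRinv _, mul_one]
    have h2 : Rg y * Rg (y⁻¹ * c.out) = Rg c.out := by
      rw [hRmul]
      congr 1
      group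
    have h3 : Rg (y⁻¹ * c.out)⁻¹ * Rg y⁻¹ = Rg c.out⁻¹ := by
      rw [hRmul]
      congr 1
      group
    show Rg y * β * Rg y⁻¹ = Rg c.out * β * Rg c.out⁻¹
    calc Rg y * β * Rg y⁻¹
        = Rg y * (Rg (y⁻¹ * c.out) * β * Rg (y⁻¹ * c.out)⁻¹) * Rg y⁻¹ := by rw [hββ]
      _ = (Rg y * Rg (y⁻¹ * c.out)) * β * (Rg (y⁻¹ * c.out)⁻¹ * Rg y⁻¹) := by
          simp only [mul_assoc]
      _ = Rg c.out * β * Rg c.out⁻¹ := by rw [h2, h3]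
  have hstep : ∀ (x : G) (c : G ⧸ H), Rg x * F c * Rg x⁻¹ = F (x • c) := by
    intro x c
    have h1 : Rg x * F c * Rg x⁻¹ = Rg (x * c.out) * β * Rg (x * c.out)⁻¹ := by
      show Rg x * (Rg c.out * β * Rg c.out⁻¹) * Rg x⁻¹ = _
      rw [mul_inv_rev, ← hRmul, ← hRmul]
      simp only [mul_assoc]
    rw [h1]
    refine hF (x * c.out) (x • c) ?_
    rw [← smul_eq_mul]
    exact MulAction.Quotient.mk_smul_out H x c
  have hTx : ∀ x : G, Commute (Rg x) T := by
    intro x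
    have hconj : Rg x * T * Rg x⁻¹ = T := by
      show Rg x * (∑ c : G ⧸ H, F c) * Rg x⁻¹ = ∑ c : G ⧸ H, F c
      rw [Finset.mul_sum, Finset.sum_mul]
      calc ∑ c : G ⧸ H, Rg x * F c * Rg x⁻¹
          = ∑ c : G ⧸ H, F (x • c) := Finset.sum_congr rfl fun c _ => hstep x c
        _ = ∑ c : G ⧸ H, F c :=
            Fintype.sum_bijective (x • ·) (MulAction.bijective x) _ _ (fun c => rfl)
    show Rg x * T = T * Rg x
    calc Rg x * T = Rg x * T * (Rg x⁻¹ * Rg x) := by rw [hRinv' x, mul_one]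
      _ = (Rg x * T * Rg x⁻¹) * Rg x := by simp only [mul_assoc]
      _ = T * Rg x := by rw [hconj]
  have hTa : ∀ a : MonoidAlgebra k G, Commute (ρ a) T := by
    intro a
    induction a using MonoidAlgebra.induction_on with
    | of x => exact hTx x
    | add a b ha hb =>
        rw [map_add]
        exact ha.add_left hb
    | smul c a ha =>
        rw [map_smul]
        exact ha.smul_left c
  -- Schur's lemma: T is multiplication by a scalar μ
  obtain ⟨μ, hμ⟩ := Module.End.exists_eigenvalue T
  obtain ⟨v₁, hv₁⟩ := hμ.exists_hasEigenvector
  let S : V →ₗ[MonoidAlgebra k G] V :=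
    { toFun := fun z => T z - μ • z
      map_add' := fun a b => by
        show T (a + b) - μ • (a + b) = (T a - μ • a) + (T b - μ • b)
        rw [map_add, smul_add]
        abel
      map_smul' := fun a z => by
        simp only [RingHom.id_apply]
        have h1 : T (a • z) = a • T z := by
          have h2 := LinearMap.congr_fun (hTa a).eq z
          simp only [Module.End.mul_apply, hρ] at h2
          exact h2.symm
        rw [h1, smul_sub, smul_comm μ a z] }
  have hKtop : LinearMap.ker S = ⊤ := by
    rcases eq_bot_or_eq_top (LinearMap.ker S) with hbot | htop
    · exfalso
      have hmem : v₁ ∈ LinearMap.ker S := by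
        rw [LinearMap.mem_ker]
        show T v₁ - μ • v₁ = 0
        rw [hv₁.apply_eq_smul, sub_self]
      rw [hbot, Submodule.mem_bot] at hmem
      exact hv₁.2 hmem
    · exact htop
  have hTall : ∀ z : V, T z = μ • z := by
    intro z
    have hmem : z ∈ LinearMap.ker S := by rw [hKtop]; exact Submodule.mem_top
    have h1 : T z - μ • z = 0 := hmem
    rw [sub_eq_zero] at h1
    exact h1
  -- trace of T vanishes
  have htraceT0 : LinearMap.trace k V T = 0 := by
    have hTeq : T = μ • (1 : Module.End k V) := by
      apply LinearMap.ext; intro z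
      rw [hTall z]
      simp
    rw [hTeq, map_smul, LinearMap.trace_one, hdim]
    simp [CharP.cast_eq_zero k p]
  -- trace of each Q i (r-1-i) equals 1
  have htraceQ : ∀ i ∈ Finset.range r, LinearMap.trace k V (Q i (r - 1 - i)) = 1 := by
    intro i hi
    have hi' : i < r := Finset.mem_range.mp hi
    show LinearMap.trace k V
      ((LinearMap.toSpanSingleton k V ((u ^ i) v)) ∘ₗ (l ∘ₗ (u ^ (r - 1 - i) : V →ₗ[k] V))) = 1
    rw [LinearMap.trace_comp_comm']
    have comp_eq : (l ∘ₗ (u ^ (r - 1 - i) : V →ₗ[k] V)) ∘ₗ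
        LinearMap.toSpanSingleton k V ((u ^ i) v) = (1 : k) • LinearMap.id := by
      apply LinearMap.ext_ring
      simp only [LinearMap.comp_apply, LinearMap.toSpanSingleton_apply, one_smul,
        LinearMap.smul_apply, LinearMap.id_apply]
      have hcomp : (u ^ (r - 1 - i)) ((u ^ i) v) = (u ^ (r - 1)) v := by
        rw [← Module.End.mul_apply, ← pow_add]
        have : r - 1 - i + i = r - 1 := by omega
        rw [this]
      rw [hcomp]
      exact hlw
    rw [comp_eq, map_smul, LinearMap.trace_id, Module.finrank_self]
    simp
  have htraceβ : LinearMap.trace k V β = (r : k) := by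
    show LinearMap.trace k V (∑ i ∈ Finset.range r, Q i (r - 1 - i)) = (r : k)
    rw [map_sum, Finset.sum_congr rfl htraceQ, Finset.sum_const, Finset.card_range,
      nsmul_eq_mul, mul_one]
  have htraceT : LinearMap.trace k V T = (Fintype.card (G ⧸ H) : k) * (r : k) := by
    show LinearMap.trace k V (∑ c : G ⧸ H, F c) = _
    rw [map_sum]
    have hFc : ∀ c : G ⧸ H, LinearMap.trace k V (F c) = (r : k) := by
      intro c
      show LinearMap.trace k V (Rg c.out * β * Rg c.out⁻¹) = (r : k)
      rw [LinearMap.trace_mul_comm, ← mul_assoc, hRinv' _, one_mul]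
      exact htraceβ
    rw [Finset.sum_congr rfl fun c _ => hFc c, Finset.sum_const, Finset.card_univ,
      nsmul_eq_mul]
  -- p does not divide [G : H]
  have hindexnd : ¬ (p ∣ Fintype.card (G ⧸ H)) := by
    intro hdvd
    have hcards : Nat.card H * H.index = Nat.card G := Subgroup.card_mul_index H
    have hcardH : Nat.card H = p := by
      show Nat.card (Subgroup.zpowers g) = p
      rw [Nat.card_zpowers, hg]
    have hidx : H.index = Fintype.card (G ⧸ H) := by
      rw [Subgroup.index_eq_card, Nat.card_eq_fintype_card]
    have hdvd2 : p ^ 2 ∣ Nat.card G := by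
      rw [← hcards, hcardH, hidx, pow_two]
      exact mul_dvd_mul_left p hdvd
    have hQ0 : Nat.card (default : Sylow p G) = p := hSyl default
    have h2 := Sylow.card_eq_multiplicity (default : Sylow p G)
    rw [hQ0] at h2
    have h3 : p ^ 1 = p ^ (Nat.card G).factorization p := by
      rw [pow_one]
      exact h2
    have hfact : (Nat.card G).factorization p = 1 :=
      (Nat.pow_right_injective hp.two_le h3).symm
    have hle : (2 : ℕ) ≤ (Nat.card G).factorization p :=
      (Nat.Prime.pow_dvd_iff_le_factorization hp (Nat.card_pos).ne').mp hdvd2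
    omega
  -- final contradiction
  have hzero : (Fintype.card (G ⧸ H) : k) * (r : k) = 0 := by
    rw [← htraceT, htraceT0]
  rcases mul_eq_zero.mp hzero with h | h
  · exact hindexnd ((CharP.cast_eq_zero_iff k p _).mp h)
  · have hdr : p ∣ r := (CharP.cast_eq_zero_iff k p r).mp h
    have := Nat.le_of_dvd (by omega) hdr
    omega
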